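/- Let λ₁, λ₂, λ, c be real numbers with λ² = λ₁λ₂ and λ₁ + 3λ₂ ≠ 0. Set a = −4λ²·c/(λ₁+3λ₂)² and b = λ(λ₁−3λ₂)·c/(λ₁+3λ₂)². Then 7a² + 8b² + c² = ((λ₁² + 9λ₂² + 10λ²)/(λ₁+3λ₂)²)²·c² and (c − a)² = ((λ₁² + 9λ₂² + 10λ²)/(λ₁+3λ₂)²)²·c²; in particular (c − a)² = 7a² + 8b² + c². -/
import Mathlib

theorem stmt_8 (l1 l2 l c : ℝ) (hl : l ^ 2 = l1 * l2)
    (hne : l1 + 3 * l2 ≠ 0)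
    (a b : ℝ)
    (ha : a = -4 * l ^ 2 * c / (l1 + 3 * l2) ^ 2)
    (hb : b = l * (l1 - 3 * l2) * c / (l1 + 3 * l2) ^ 2) :
    7 * a ^ 2 + 8 * b ^ 2 + c ^ 2
      = ((l1 ^ 2 + 9 * l2 ^ 2 + 10 * l ^ 2) / (l1 + 3 * l2) ^ 2) ^ 2 * c ^ 2 ∧
    (c - a) ^ 2
      = ((l1 ^ 2 + 9 * l2 ^ 2 + 10 * l ^ 2) / (l1 + 3 * l2) ^ 2) ^ 2 * c ^ 2 ∧
    (c - a) ^ 2 = 7 * a ^ 2 + 8 * b ^ 2 + c ^ 2 := by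
  have h2 : (l1 + 3 * l2) ^ 2 ≠ 0 := pow_ne_zero _ hne
  subst ha hb
  refine ⟨?_, ?_, ?_⟩ <;> field_simp
  · linear_combination (12 * c ^ 2 * (l ^ 2 - l1 ^ 2 - 9 * l2 ^ 2 - 3 * l1 * l2)) * hl
  · linear_combination (-12 * c ^ 2 * (l1 ^ 2 + 9 * l2 ^ 2 + 3 * l1 * l2 + 7 * l ^ 2)) * hl
  · linear_combination (-96 * c ^ 2 * l ^ 2) * hl
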